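/- Let x₀ ∈ ℝ, τ > 0, ℓ > 0, A > 0 and δ > 0. Suppose H : (x₀ − δ, x₀ + δ) → ℝ satisfies |H(x₀ + h)| = A·|h|^ℓ + o(|h|^ℓ) as h → 0, and G is a map from a neighborhood of x₀ into (x₀ − δ, x₀ + δ) which is differentiable at x₀ with G(x₀) = x₀, and such that τ⁻¹·H(x) = H(G(x)) for all x in a neighborhood of x₀. Then |G'(x₀)| = τ^{−1/ℓ}. -/

import Mathlib

open Set Filter Topology Asymptotics

/-- If `|H(x₀+h)| = A·|h|^ℓ + o(|h|^ℓ)` as `h → 0`, `G` fixes `x₀`, is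
differentiable there with derivative `g`, maps a neighborhood of `x₀` into `(x₀-δ, x₀+δ)`,
and `τ⁻¹·H(x) = H(G(x))` near `x₀`, then `|G'(x₀)| = τ^{-1/ℓ}`. -/
theorem statement8 (x₀ τ ℓ A δ : ℝ) (hτ : 0 < τ) (hℓ : 0 < ℓ) (hA : 0 < A) (hδ : 0 < δ)
    (H G : ℝ → ℝ) (g : ℝ)
    (hH : (fun h : ℝ => |H (x₀ + h)| - A * |h| ^ ℓ) =o[nhds (0:ℝ)] fun h : ℝ => |h| ^ ℓ)
    (hGmaps : ∀ᶠ x in nhds x₀, G x ∈ Ioo (x₀ - δ) (x₀ + δ))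
    (hGd : HasDerivAt G g x₀) (hGfix : G x₀ = x₀)
    (hfun : ∀ᶠ x in nhds x₀, τ⁻¹ * H x = H (G x)) :
    |g| = τ ^ (-(1/ℓ)) := by
  set K : ℝ → ℝ := fun h => G (x₀ + h) - x₀ with hKdef
  have hmap : Tendsto (fun h : ℝ => x₀ + h) (𝓝 0) (𝓝 x₀) := by
    exact (continuous_const.add continuous_id).tendsto' (0 : ℝ) x₀ (by simp)
  -- K tends to 0
  have hk0 : Tendsto K (𝓝 0) (𝓝 0) := by
    have h1 : Tendsto (fun h : ℝ => G (x₀ + h)) (𝓝 0) (𝓝 x₀) := by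
      have := hGd.continuousAt.tendsto.comp hmap
      rwa [hGfix] at this
    simpa [hKdef] using h1.sub (tendsto_const_nhds (x := x₀))
  have hmap' : Tendsto (fun h : ℝ => x₀ + h) (𝓝[≠] 0) (𝓝[≠] x₀) := by
    apply tendsto_nhdsWithin_of_tendsto_nhds_of_eventually_within _
      (hmap.mono_left nhdsWithin_le_nhds)
    filter_upwards [self_mem_nhdsWithin] with h hh
    simpa using hh
  -- slope tends to g
  have hslope : Tendsto (fun h : ℝ => K h / h) (𝓝[≠] 0) (𝓝 g) := by
    have h1 := (hasDerivAt_iff_tendsto_slope.mp hGd).comp hmap'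
    have h2 : (fun h : ℝ => K h / h) =ᶠ[𝓝[≠] 0] (slope G x₀ ∘ fun h => x₀ + h) := by
      filter_upwards [self_mem_nhdsWithin] with h hh
      simp [slope_def_field, hKdef, hGfix, Function.comp]
    exact h1.congr' h2.symm
  have habs : Tendsto (fun h : ℝ => |K h| / |h|) (𝓝[≠] 0) (𝓝 |g|) := by
    have := hslope.abs
    simpa [abs_div] using this
  -- ratio |H(x₀+h)|/|h|^ℓ → A
  have hne : ∀ᶠ h : ℝ in 𝓝[≠] 0, h ≠ (0:ℝ) := self_mem_nhdsWithin
  have t1 := hH.tendsto_div_nhds_zero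
  have t2 : Tendsto (fun h : ℝ => |H (x₀ + h)| / |h| ^ ℓ) (𝓝[≠] 0) (𝓝 A) := by
    have h1 : Tendsto (fun h : ℝ => (|H (x₀ + h)| - A * |h| ^ ℓ) / |h| ^ ℓ + A)
        (𝓝[≠] 0) (𝓝 (0 + A)) :=
      (t1.mono_left nhdsWithin_le_nhds).add tendsto_const_nhds
    rw [zero_add] at h1
    refine h1.congr' ?_
    filter_upwards [hne] with h hh
    have hpos : (0:ℝ) < |h| ^ ℓ := Real.rpow_pos_of_pos (abs_pos.mpr hh) ℓ
    field_simp
    ring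
  -- eventual bound |K h| ≤ (|g|+1)|h|
  have hbound : ∀ᶠ h : ℝ in 𝓝[≠] 0, |K h| ≤ (|g| + 1) * |h| := by
    have hlt : ∀ᶠ h : ℝ in 𝓝[≠] 0, |K h| / |h| < |g| + 1 :=
      habs.eventually_lt_const (by linarith)
    filter_upwards [hlt, hne] with h h1 h2
    have hpos : (0:ℝ) < |h| := abs_pos.mpr h2
    calc |K h| = |K h| / |h| * |h| := by field_simp
    _ ≤ (|g| + 1) * |h| := by nlinarith
  -- little-o after composing with K
  have hk0' : Tendsto K (𝓝[≠] 0) (𝓝 0) := hk0.mono_left nhdsWithin_le_nhds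
  have o1 : (fun h : ℝ => |H (x₀ + K h)| - A * |K h| ^ ℓ) =o[𝓝[≠] 0]
      (fun h : ℝ => |K h| ^ ℓ) := hH.comp_tendsto hk0'
  have O1 : (fun h : ℝ => |K h| ^ ℓ) =O[𝓝[≠] 0] (fun h : ℝ => |h| ^ ℓ) := by
    rw [Asymptotics.isBigO_iff]
    refine ⟨(|g| + 1) ^ ℓ, ?_⟩
    filter_upwards [hbound] with h h1
    have hg1 : (0:ℝ) ≤ |g| + 1 := by positivity
    have h2 : |K h| ^ ℓ ≤ ((|g| + 1) * |h|) ^ ℓ :=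
      Real.rpow_le_rpow (abs_nonneg _) h1 hℓ.le
    rw [Real.mul_rpow hg1 (abs_nonneg _)] at h2
    have e1 : ‖|K h| ^ ℓ‖ = |K h| ^ ℓ :=
      Real.norm_of_nonneg (Real.rpow_nonneg (abs_nonneg _) _)
    have e2 : ‖|h| ^ ℓ‖ = |h| ^ ℓ :=
      Real.norm_of_nonneg (Real.rpow_nonneg (abs_nonneg _) _)
    rw [e1, e2]; exact h2
  have t3 := (o1.trans_isBigO O1).tendsto_div_nhds_zero
  -- |H(x₀+K h)| = τ⁻¹ |H(x₀+h)| eventually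
  have hfe : ∀ᶠ h : ℝ in 𝓝[≠] 0, |H (x₀ + K h)| = τ⁻¹ * |H (x₀ + h)| := by
    have hev : ∀ᶠ h : ℝ in 𝓝 0, τ⁻¹ * H (x₀ + h) = H (G (x₀ + h)) := hmap.eventually hfun
    filter_upwards [hev.filter_mono nhdsWithin_le_nhds] with h h1
    have hx : x₀ + K h = G (x₀ + h) := by simp [hKdef]
    rw [hx, ← h1, abs_mul, abs_of_pos (inv_pos.mpr hτ)]
  have t4 : Tendsto (fun h : ℝ => |H (x₀ + K h)| / |h| ^ ℓ) (𝓝[≠] 0) (𝓝 (τ⁻¹ * A)) := by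
    have h1 : Tendsto (fun h : ℝ => τ⁻¹ * (|H (x₀ + h)| / |h| ^ ℓ)) (𝓝[≠] 0)
        (𝓝 (τ⁻¹ * A)) := t2.const_mul _
    refine h1.congr' ?_
    filter_upwards [hfe] with h h1
    rw [h1]; ring
  have t5 : Tendsto (fun h : ℝ => A * |K h| ^ ℓ / |h| ^ ℓ) (𝓝[≠] 0) (𝓝 (τ⁻¹ * A)) := by
    have h1 := t4.sub t3
    rw [sub_zero] at h1
    refine h1.congr ?_
    intro h
    rw [sub_div]; ring
  have t6 : Tendsto (fun h : ℝ => (|K h| / |h|) ^ ℓ) (𝓝[≠] 0) (𝓝 τ⁻¹) := by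
    have h1 : Tendsto (fun h : ℝ => A * |K h| ^ ℓ / |h| ^ ℓ * A⁻¹) (𝓝[≠] 0)
        (𝓝 (τ⁻¹ * A * A⁻¹)) := t5.mul_const _
    rw [mul_assoc, mul_inv_cancel₀ hA.ne', mul_one] at h1
    refine h1.congr ?_
    intro h
    rw [Real.div_rpow (abs_nonneg _) (abs_nonneg _), div_mul_eq_mul_div, mul_right_comm,
      mul_inv_cancel₀ hA.ne', one_mul]
  have t7 : Tendsto (fun h : ℝ => (|K h| / |h|) ^ ℓ) (𝓝[≠] 0) (𝓝 (|g| ^ ℓ)) :=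
    ((Real.continuousAt_rpow_const _ ℓ (Or.inr hℓ.le)).tendsto).comp habs
  have key : |g| ^ ℓ = τ⁻¹ := tendsto_nhds_unique t7 t6
  have h1 : (|g| ^ ℓ) ^ ℓ⁻¹ = |g| := Real.rpow_rpow_inv (abs_nonneg _) hℓ.ne'
  rw [key] at h1
  rw [← h1, Real.inv_rpow hτ.le, one_div, ← Real.rpow_neg hτ.le]
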